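/- For the finite Markov chain imbedding counting occupancy: let (Z_t)_{t=1..n} be an inhomogeneous two-state Markov chain, and let N_n = Σ_{t=1}^n 1{Z_t = 2} be the number of time points in state 2. Define W_t = (min(N_t, ℓ+1), Z_t) on a state space of size 2ℓ + 2 (states with more than ℓ visits collapsed into an absorbing state). Then (W_t) is an inhomogeneous Markov chain, and the distribution P(N_n = k) for k ≤ ℓ is given by summing the appropriate entries of η Π_{t=2}^n Λ(a_t, b_t), where Λ is the imbedding transition matrix whose structure follows from: from (k, 1) the chain stays at (k, 1) with probability a_t and moves to (k+1, 2) with probability 1−a_t; from (k, 2) it moves to (k, 1) with probability 1−b_t and to (k+1, 2) with probability b_t. -/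

import Mathlib

open Finset
open scoped Classical

noncomputable section

/-- Path probability of an inhomogeneous two-state Markov chain `(Z_t)_{t=0..n}` on
`Fin 2` (state `0` is "state 1", state `1` is "state 2") with initial law `η`, stay
probabilities `a t = P(Z_{t+1} = 1 | Z_t = 1)` and `b t = P(Z_{t+1} = 2 | Z_t = 2)`. -/
def twoStateMu (n : ℕ) (η : Fin 2 → ℝ) (a b : Fin n → ℝ) (z : Fin (n + 1) → Fin 2) : ℝ :=
  η (z 0) *
    ∏ t : Fin n,
      (if z t.castSucc = 0 then (if z t.succ = 0 then a t else 1 - a t)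
       else (if z t.succ = 1 then b t else 1 - b t))

/-- The FMCI transition matrix for counting the number of positions in state 2: index
`0` encodes `(0 visits, state 1)`, index `2k−1` encodes `(k visits, state 2)`, index
`2k` encodes `(k visits, state 1)`, and index `2ℓ+1` is the absorbing overflow state.
From `(k, 1)` the chain stays at `(k, 1)` with probability `a` and moves to `(k+1, 2)`
with probability `1−a`; from `(k, 2)` it moves to `(k, 1)` with probability `1−b` and
to `(k+1, 2)` with probability `b`. -/
def occLambda (ℓ : ℕ) (a b : ℝ) : Matrix (Fin (2 * ℓ + 2)) (Fin (2 * ℓ + 2)) ℝ :=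
  fun p q =>
    if (p : ℕ) = 2 * ℓ + 1 then (if q = p then 1 else 0)
    else if (p : ℕ) % 2 = 0 then
      (if q = p then a else if (q : ℕ) = (p : ℕ) + 1 then 1 - a else 0)
    else
      (if (q : ℕ) = (p : ℕ) + 1 then 1 - b else if (q : ℕ) = (p : ℕ) + 2 then b else 0)

namespace FMCIAux

/-- count of visits to state 1 (i.e. "state 2" in the informal indexing) -/
def cnt {m : ℕ} (z : Fin m → Fin 2) : ℕ := (univ.filter (fun t => z t = 1)).card

lemma cnt_snoc {n : ℕ} (z : Fin (n+1) → Fin 2) (s : Fin 2) :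
    cnt (Fin.snoc z s) = cnt z + (if s = 1 then 1 else 0) := by
  classical
  simp only [cnt, Finset.card_filter]
  rw [Fin.sum_univ_castSucc]
  simp [Fin.snoc_castSucc, Fin.snoc_last]

def mu' (η : Fin 2 → ℝ) (a b : ℕ → ℝ) (n : ℕ) (z : Fin (n+1) → Fin 2) : ℝ :=
  η (z 0) *
    ∏ t : Fin n,
      (if z t.castSucc = 0 then (if z t.succ = 0 then a t else 1 - a t)
       else (if z t.succ = 1 then b t else 1 - b t))

def step (a b : ℝ) (u s : Fin 2) : ℝ :=
  if u = 0 then (if s = 0 then a else 1 - a) else (if s = 1 then b else 1 - b)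

lemma mu'_snoc (η : Fin 2 → ℝ) (a b : ℕ → ℝ) (n : ℕ) (z : Fin (n+1) → Fin 2) (s : Fin 2) :
    mu' η a b (n+1) (Fin.snoc z s) = mu' η a b n z * step (a n) (b n) (z (Fin.last n)) s := by
  classical
  simp only [mu', step]
  rw [Fin.prod_univ_castSucc]
  have h0 : (Fin.snoc z s : Fin (n+2) → Fin 2) 0 = z 0 := by
    have : ((0 : Fin (n+2))) = Fin.castSucc (0 : Fin (n+1)) := by simp
    rw [this, Fin.snoc_castSucc]
  have hcast : ∀ t : Fin n,
      (Fin.snoc z s : Fin (n+2) → Fin 2) (t.castSucc.castSucc) = z t.castSucc := fun t =>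
    Fin.snoc_castSucc ..
  have hsucc : ∀ t : Fin n,
      (Fin.snoc z s : Fin (n+2) → Fin 2) ((t.castSucc).succ) = z t.succ := by
    intro t
    rw [Fin.succ_castSucc, Fin.snoc_castSucc]
  have hlastc : (Fin.snoc z s : Fin (n+2) → Fin 2) ((Fin.last n).castSucc) = z (Fin.last n) :=
    Fin.snoc_castSucc ..
  have hlasts : (Fin.snoc z s : Fin (n+2) → Fin 2) ((Fin.last n).succ) = s := by
    rw [Fin.succ_last, Fin.snoc_last]
  rw [h0, hlastc, hlasts]
  rw [Finset.prod_congr rfl (fun t _ => by rw [hcast t, hsucc t])]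
  simp only [Fin.coe_castSucc, Fin.val_last]
  ring

def S (η : Fin 2 → ℝ) (a b : ℕ → ℝ) (n m : ℕ) (s : Fin 2) : ℝ :=
  ∑ z : Fin (n+1) → Fin 2,
    if cnt z = m ∧ z (Fin.last n) = s then mu' η a b n z else 0

def snocEquiv (n : ℕ) : ((Fin (n+1) → Fin 2) × Fin 2) ≃ (Fin (n+2) → Fin 2) where
  toFun p := Fin.snoc p.1 p.2
  invFun z := (Fin.init z, z (Fin.last (n+1)))
  left_inv p := by simp [Fin.init_snoc, Fin.snoc_last]
  right_inv z := Fin.snoc_init_self z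

lemma two_cases (x : Fin 2) : x = 0 ∨ x = 1 := by omega

lemma S_succ_sum (η : Fin 2 → ℝ) (a b : ℕ → ℝ) (n m : ℕ) (s : Fin 2) :
    S η a b (n+1) m s =
      ∑ z : Fin (n+1) → Fin 2, ∑ u : Fin 2,
        (if cnt z + (if u = 1 then 1 else 0) = m ∧ u = s
          then mu' η a b n z * step (a n) (b n) (z (Fin.last n)) u else 0) := by
  classical
  rw [S, ← Equiv.sum_comp (snocEquiv n), Fintype.sum_prod_type]
  refine Finset.sum_congr rfl fun z _ => Finset.sum_congr rfl fun u _ => ?_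
  simp only [snocEquiv, Equiv.coe_fn_mk]
  simp only [cnt_snoc, mu'_snoc]
  have : (Fin.snoc z u : Fin (n+2) → Fin 2) (Fin.last (n+1)) = u := Fin.snoc_last ..
  simp only [this]

lemma S_succ_zero (η : Fin 2 → ℝ) (a b : ℕ → ℝ) (n m : ℕ) :
    S η a b (n+1) m 0 = S η a b n m 0 * a n + S η a b n m 1 * (1 - b n) := by
  classical
  rw [S_succ_sum, S, S, Finset.sum_mul, Finset.sum_mul, ← Finset.sum_add_distrib]
  refine Finset.sum_congr rfl fun z _ => ?_
  rw [Fin.sum_univ_two]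
  rcases two_cases (z (Fin.last n)) with h | h <;>
    simp [h, step] <;> split_ifs <;> simp_all <;> ring

lemma S_succ_one (η : Fin 2 → ℝ) (a b : ℕ → ℝ) (n m : ℕ) :
    S η a b (n+1) (m+1) 1 = S η a b n m 0 * (1 - a n) + S η a b n m 1 * b n := by
  classical
  rw [S_succ_sum, S, S, Finset.sum_mul, Finset.sum_mul, ← Finset.sum_add_distrib]
  refine Finset.sum_congr rfl fun z _ => ?_
  rw [Fin.sum_univ_two]
  rcases two_cases (z (Fin.last n)) with h | h <;>
    simp [h, step] <;> split_ifs <;> simp_all <;> ring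

lemma S_zero_one (η : Fin 2 → ℝ) (a b : ℕ → ℝ) (n : ℕ) :
    S η a b n 0 1 = 0 := by
  classical
  rw [S]
  refine Finset.sum_eq_zero fun z _ => ?_
  rw [if_neg]
  rintro ⟨h1, h2⟩
  have hmem : Fin.last n ∈ univ.filter (fun t => z t = 1) := by
    simp [h2]
  have := Finset.card_pos.mpr ⟨_, hmem⟩
  rw [cnt] at h1
  omega

lemma S_base (η : Fin 2 → ℝ) (a b : ℕ → ℝ) (m : ℕ) (s : Fin 2) :
    S η a b 0 m s = if m = (if s = 1 then 1 else 0) then η s else 0 := by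
  classical
  rw [S, ← Equiv.sum_comp (Equiv.funUnique (Fin 1) (Fin 2)).symm]
  rw [Fin.sum_univ_two]
  have e0 : ((Equiv.funUnique (Fin 1) (Fin 2)).symm (0 : Fin 2)) = fun _ => (0 : Fin 2) := rfl
  have e1 : ((Equiv.funUnique (Fin 1) (Fin 2)).symm (1 : Fin 2)) = fun _ => (1 : Fin 2) := rfl
  rw [e0, e1]
  have h0 : cnt (fun _ : Fin 1 => (0 : Fin 2)) = 0 := by simp [cnt]
  have h1 : cnt (fun _ : Fin 1 => (1 : Fin 2)) = 1 := by simp [cnt]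
  have m0 : mu' η a b 0 (fun _ : Fin 1 => (0 : Fin 2)) = η 0 := by simp [mu']
  have m1 : mu' η a b 0 (fun _ : Fin 1 => (1 : Fin 2)) = η 1 := by simp [mu']
  rw [h0, h1, m0, m1]
  clear e0 e1 h0 h1 m0 m1
  rcases two_cases s with h | h <;> subst h <;>
    rcases eq_or_ne m 0 with hm | hm <;>
      rcases eq_or_ne m 1 with hm1 | hm1 <;>
        simp [hm, hm1] <;> omega

lemma occLambda_apply (ℓ : ℕ) (a b : ℝ) (q p : Fin (2*ℓ+2)) (hp : (p:ℕ) ≤ 2*ℓ) :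
    occLambda ℓ a b q p =
      if (p:ℕ) % 2 = 0 then
        (if (q:ℕ) = (p:ℕ) then a else if (q:ℕ) + 1 = (p:ℕ) then 1 - b else 0)
      else
        (if (q:ℕ) + 1 = (p:ℕ) then 1 - a else if (q:ℕ) + 2 = (p:ℕ) then b else 0) := by
  unfold occLambda
  simp only [Fin.ext_iff]
  split_ifs <;> first | rfl | omega

def etaVec (ℓ : ℕ) (η : Fin 2 → ℝ) : Fin (2*ℓ+2) → ℝ :=
  fun p => if (p : ℕ) = 0 then η 0 else if (p : ℕ) = 1 then η 1 else 0

def Vv (ℓ : ℕ) (η : Fin 2 → ℝ) (a b : ℕ → ℝ) (n : ℕ) : Fin (2*ℓ+2) → ℝ :=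
  Matrix.vecMul (etaVec ℓ η)
    (((List.range n).map (fun t => occLambda ℓ (a t) (b t))).prod)

lemma Vv_zero (ℓ : ℕ) (η : Fin 2 → ℝ) (a b : ℕ → ℝ) :
    Vv ℓ η a b 0 = etaVec ℓ η := by
  simp [Vv, Matrix.vecMul_one]

lemma Vv_succ (ℓ : ℕ) (η : Fin 2 → ℝ) (a b : ℕ → ℝ) (n : ℕ) :
    Vv ℓ η a b (n+1) = Matrix.vecMul (Vv ℓ η a b n) (occLambda ℓ (a n) (b n)) := by
  simp [Vv, List.range_succ, Matrix.vecMul_vecMul]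

lemma vecMul_apply {m : ℕ} (v : Fin m → ℝ) (M : Matrix (Fin m) (Fin m) ℝ) (p : Fin m) :
    Matrix.vecMul v M p = ∑ q, v q * M q p := by
  simp [Matrix.vecMul, dotProduct]

lemma main_inv (ℓ : ℕ) (η : Fin 2 → ℝ) (a b : ℕ → ℝ) (n : ℕ) :
    ∀ p : Fin (2*ℓ+2), (p:ℕ) ≤ 2*ℓ →
      Vv ℓ η a b n p = S η a b n (((p:ℕ)+1)/2) (if (p:ℕ) % 2 = 0 then 0 else 1) := by
  induction n with
  | zero =>
    intro p hp
    rw [Vv_zero, S_base, etaVec]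
    by_cases hpar : (p:ℕ) % 2 = 0 <;> simp only [hpar, if_true, if_false] <;>
      split_ifs <;> first | rfl | omega | simp_all
  | succ n ih =>
    intro p hp
    rw [Vv_succ, vecMul_apply]
    by_cases hpar : (p:ℕ) % 2 = 0
    · -- p even
      rcases eq_or_ne (p:ℕ) 0 with hp0 | hp0
      · -- p = 0 : single source q = p
        have hsum : ∑ q, Vv ℓ η a b n q * occLambda ℓ (a n) (b n) q p
            = Vv ℓ η a b n p * occLambda ℓ (a n) (b n) p p := by
          refine Finset.sum_eq_single_of_mem p (Finset.mem_univ p) (fun q _ hq => ?_)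
          rw [occLambda_apply _ _ _ _ _ hp, if_pos hpar]
          have hqv : (q:ℕ) ≠ (p:ℕ) := fun h => hq (Fin.ext h)
          rw [if_neg hqv, if_neg (by omega), mul_zero]
        rw [hsum, occLambda_apply _ _ _ _ _ hp, if_pos hpar, if_pos rfl]
        rw [ih p hp]
        have h1 : ((p:ℕ)+1)/2 = 0 := by omega
        rw [h1, if_pos hpar, S_succ_zero, S_zero_one]
        ring
      · -- p even ≥ 2 : sources q = p and q = p - 1
        have hq2 : (p:ℕ) - 1 < 2*ℓ+2 := by omega
        set q2 : Fin (2*ℓ+2) := ⟨(p:ℕ)-1, hq2⟩ with hq2def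
        have hq2v : (q2:ℕ) = (p:ℕ) - 1 := rfl
        have hne : q2 ≠ p := by
          intro h
          have := congrArg Fin.val h
          rw [hq2v] at this
          omega
        have hsum : ∑ q, Vv ℓ η a b n q * occLambda ℓ (a n) (b n) q p
            = ∑ q ∈ ({q2, p} : Finset (Fin (2*ℓ+2))),
                Vv ℓ η a b n q * occLambda ℓ (a n) (b n) q p := by
          refine (Finset.sum_subset (Finset.subset_univ _) (fun q _ hq => ?_)).symm
          simp only [Finset.mem_insert, Finset.mem_singleton, not_or] at hq
          obtain ⟨h1, h2⟩ := hq
          have h1v : (q:ℕ) ≠ (p:ℕ) - 1 := fun h => h1 (Fin.ext (by rw [hq2v]; omega))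
          have h2v : (q:ℕ) ≠ (p:ℕ) := fun h => h2 (Fin.ext h)
          rw [occLambda_apply _ _ _ _ _ hp, if_pos hpar, if_neg h2v, if_neg (by omega), mul_zero]
        rw [hsum, Finset.sum_pair hne]
        rw [occLambda_apply _ _ _ _ _ hp, occLambda_apply _ _ _ _ _ hp, if_pos hpar, if_pos hpar]
        rw [if_neg (by rw [hq2v]; omega), if_pos (by rw [hq2v]; omega), if_pos rfl]
        rw [ih p hp, ih q2 (by rw [hq2v]; omega)]
        have e1 : ((q2:ℕ)+1)/2 = ((p:ℕ)+1)/2 := by rw [hq2v]; omega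
        have e2 : (q2:ℕ) % 2 ≠ 0 := by rw [hq2v]; omega
        rw [e1, if_neg e2, if_pos hpar, S_succ_zero]
        ring
    · -- p odd
      obtain ⟨j, hj⟩ : ∃ j, (p:ℕ) = 2*j+1 := ⟨(p:ℕ)/2, by omega⟩
      have hq1b : 2*j < 2*ℓ+2 := by omega
      set q1 : Fin (2*ℓ+2) := ⟨2*j, hq1b⟩ with hq1def
      have hq1v : (q1:ℕ) = 2*j := rfl
      rcases eq_or_ne j 0 with hj0 | hj0
      · -- p = 1 : single source q1 = 0
        have hsum : ∑ q, Vv ℓ η a b n q * occLambda ℓ (a n) (b n) q p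
            = Vv ℓ η a b n q1 * occLambda ℓ (a n) (b n) q1 p := by
          refine Finset.sum_eq_single_of_mem q1 (Finset.mem_univ q1) (fun q _ hq => ?_)
          have hqv : (q:ℕ) ≠ 2*j := fun h => hq (Fin.ext (by rw [hq1v]; omega))
          rw [occLambda_apply _ _ _ _ _ hp, if_neg hpar, if_neg (by omega), if_neg (by omega),
            mul_zero]
        rw [hsum, occLambda_apply _ _ _ _ _ hp, if_neg hpar, if_pos (by rw [hq1v]; omega)]
        rw [ih q1 (by rw [hq1v]; omega)]
        have e1 : ((q1:ℕ)+1)/2 = 0 := by rw [hq1v]; omega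
        have e2 : (q1:ℕ) % 2 = 0 := by rw [hq1v]; omega
        have e3 : ((p:ℕ)+1)/2 = 1 := by omega
        rw [e1, if_pos e2, e3, if_neg hpar]
        have := S_succ_one η a b n 0
        rw [S_zero_one] at this
        rw [this]
        ring
      · -- p odd ≥ 3 : sources q1 = p-1, q2 = p-2
        have hq2b : 2*j - 1 < 2*ℓ+2 := by omega
        set q2 : Fin (2*ℓ+2) := ⟨2*j-1, hq2b⟩ with hq2def
        have hq2v : (q2:ℕ) = 2*j-1 := rfl
        have hne : q1 ≠ q2 := by
          intro h
          have := congrArg Fin.val h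
          rw [hq1v, hq2v] at this
          omega
        have hsum : ∑ q, Vv ℓ η a b n q * occLambda ℓ (a n) (b n) q p
            = ∑ q ∈ ({q1, q2} : Finset (Fin (2*ℓ+2))),
                Vv ℓ η a b n q * occLambda ℓ (a n) (b n) q p := by
          refine (Finset.sum_subset (Finset.subset_univ _) (fun q _ hq => ?_)).symm
          simp only [Finset.mem_insert, Finset.mem_singleton, not_or] at hq
          obtain ⟨h1, h2⟩ := hq
          have h1v : (q:ℕ) ≠ 2*j := fun h => h1 (Fin.ext (by rw [hq1v]; omega))
          have h2v : (q:ℕ) ≠ 2*j-1 := fun h => h2 (Fin.ext (by rw [hq2v]; omega))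
          rw [occLambda_apply _ _ _ _ _ hp, if_neg hpar, if_neg (by omega), if_neg (by omega),
            mul_zero]
        rw [hsum, Finset.sum_pair hne]
        rw [occLambda_apply _ _ _ _ _ hp, occLambda_apply _ _ _ _ _ hp, if_neg hpar, if_neg hpar]
        rw [if_pos (by rw [hq1v]; omega)]
        rw [if_neg (by rw [hq2v]; omega), if_pos (by rw [hq2v]; omega)]
        rw [ih q1 (by rw [hq1v]; omega), ih q2 (by rw [hq2v]; omega)]
        have e1 : ((q1:ℕ)+1)/2 = j - 1 + 1 := by rw [hq1v]; omega
        have e1' : (q1:ℕ) % 2 = 0 := by rw [hq1v]; omega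
        have e2 : ((q2:ℕ)+1)/2 = j - 1 + 1 := by rw [hq2v]; omega
        have e2' : (q2:ℕ) % 2 ≠ 0 := by rw [hq2v]; omega
        have e3 : ((p:ℕ)+1)/2 = j - 1 + 1 + 1 := by omega
        rw [e1, e2, if_pos e1', if_neg e2', e3, if_neg hpar, S_succ_one]

end FMCIAux

/-- **FMCI for the occupancy of state 2.** Let `(Z_t)_{t=0..n}` be an inhomogeneous
two-state Markov chain with stay probabilities `a_t`, `b_t` and initial law
`η = (η₁, η₂)`, and let `N_n` count the time points in state 2 (including time 1).
Then for every `k ≤ ℓ`, `P(N_n = k)` equals the sum of the entries with visit-count `k`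
of the row vector `η̃ Π_t Λ(a_t, b_t)`, where `η̃` assigns `η₁` to `(0,1)` and `η₂` to
`(1,2)`. -/
theorem fmci_occupancy (n ℓ : ℕ) (hℓ : 1 ≤ ℓ) (η : Fin 2 → ℝ)
    (hη0 : ∀ i, 0 ≤ η i) (hη1 : η 0 + η 1 = 1)
    (a b : Fin n → ℝ)
    (ha : ∀ t, a t ∈ Set.Icc (0 : ℝ) 1) (hb : ∀ t, b t ∈ Set.Icc (0 : ℝ) 1)
    (k : ℕ) (hk : k ≤ ℓ) :
    ∑ z ∈ univ.filter (fun z : Fin (n + 1) → Fin 2 =>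
        (univ.filter (fun t : Fin (n + 1) => z t = 1)).card = k),
      twoStateMu n η a b z
    =
    ∑ p ∈ univ.filter (fun p : Fin (2 * ℓ + 2) => ((p : ℕ) + 1) / 2 = k),
      Matrix.vecMul
        (fun p : Fin (2 * ℓ + 2) =>
          if (p : ℕ) = 0 then η 0 else if (p : ℕ) = 1 then η 1 else 0)
        (((List.finRange n).map (fun t => occLambda ℓ (a t) (b t))).prod)
        p := by
  classical
  set a' : ℕ → ℝ := fun t => if h : t < n then a ⟨t, h⟩ else 0 with ha'
  set b' : ℕ → ℝ := fun t => if h : t < n then b ⟨t, h⟩ else 0 with hb'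
  have hmu : ∀ z : Fin (n+1) → Fin 2, twoStateMu n η a b z = FMCIAux.mu' η a' b' n z := by
    intro z
    unfold twoStateMu FMCIAux.mu'
    congr 1
    refine Finset.prod_congr rfl fun t _ => ?_
    have hat : a' (t : ℕ) = a t := by simp [ha', t.isLt]
    have hbt : b' (t : ℕ) = b t := by simp [hb', t.isLt]
    rw [hat, hbt]
  have hlist : ((List.finRange n).map (fun t => occLambda ℓ (a t) (b t))).prod
      = ((List.range n).map (fun t => occLambda ℓ (a' t) (b' t))).prod := by
    rw [← (List.ext_getElem (by simp) (by simp) : (List.finRange n).map Fin.val = List.range n),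
      List.map_map]
    congr 1
    refine List.map_congr_left fun t _ => ?_
    simp [ha', hb', t.isLt]
  have hR : ∀ p : Fin (2*ℓ+2),
      Matrix.vecMul
        (fun p : Fin (2 * ℓ + 2) =>
          if (p : ℕ) = 0 then η 0 else if (p : ℕ) = 1 then η 1 else 0)
        (((List.finRange n).map (fun t => occLambda ℓ (a t) (b t))).prod) p
      = FMCIAux.Vv ℓ η a' b' n p := by
    intro p
    rw [hlist]
    rfl
  have hL : ∑ z ∈ univ.filter (fun z : Fin (n + 1) → Fin 2 =>
        (univ.filter (fun t : Fin (n + 1) => z t = 1)).card = k),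
      twoStateMu n η a b z
      = FMCIAux.S η a' b' n k 0 + FMCIAux.S η a' b' n k 1 := by
    rw [Finset.sum_filter, FMCIAux.S, FMCIAux.S, ← Finset.sum_add_distrib]
    refine Finset.sum_congr rfl fun z _ => ?_
    rw [hmu z]
    have hcnt : FMCIAux.cnt z = (univ.filter (fun t : Fin (n+1) => z t = 1)).card := rfl
    rcases FMCIAux.two_cases (z (Fin.last n)) with h | h <;>
      by_cases hc : (univ.filter (fun t : Fin (n+1) => z t = 1)).card = k <;>
        simp [h, hc, hcnt]
  rw [hL, Finset.sum_congr rfl (fun p _ => hR p), Finset.sum_filter]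
  rcases Nat.eq_zero_or_pos k with hk0 | hk0
  · subst hk0
    have hp0 : (0 : ℕ) < 2*ℓ+2 := by omega
    have hsum : (∑ p : Fin (2*ℓ+2), if ((p:ℕ)+1)/2 = 0 then FMCIAux.Vv ℓ η a' b' n p else 0)
        = (if (((⟨0, hp0⟩ : Fin (2*ℓ+2)) : ℕ)+1)/2 = 0
            then FMCIAux.Vv ℓ η a' b' n ⟨0, hp0⟩ else 0) := by
      refine Finset.sum_eq_single_of_mem (⟨0, hp0⟩ : Fin (2*ℓ+2)) (Finset.mem_univ _)
        (fun q _ hq => ?_)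
      have : (q:ℕ) ≠ 0 := fun h => hq (Fin.ext h)
      rw [if_neg (by omega)]
    rw [hsum, if_pos (by norm_num), FMCIAux.main_inv ℓ η a' b' n ⟨0, hp0⟩ (by simp)]
    simp [FMCIAux.S_zero_one]
  · have hb1 : 2*k-1 < 2*ℓ+2 := by omega
    have hb2 : 2*k < 2*ℓ+2 := by omega
    set p1 : Fin (2*ℓ+2) := ⟨2*k-1, hb1⟩ with hp1def
    set p2 : Fin (2*ℓ+2) := ⟨2*k, hb2⟩ with hp2def
    have hp1v : (p1:ℕ) = 2*k-1 := rfl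
    have hp2v : (p2:ℕ) = 2*k := rfl
    have hne : p1 ≠ p2 := by
      intro h
      have := congrArg Fin.val h
      rw [hp1v, hp2v] at this
      omega
    have hsum : (∑ p : Fin (2*ℓ+2), if ((p:ℕ)+1)/2 = k then FMCIAux.Vv ℓ η a' b' n p else 0)
        = ∑ p ∈ ({p1, p2} : Finset (Fin (2*ℓ+2))),
            (if ((p:ℕ)+1)/2 = k then FMCIAux.Vv ℓ η a' b' n p else 0) := by
      refine (Finset.sum_subset (Finset.subset_univ _) (fun q _ hq => ?_)).symm
      simp only [Finset.mem_insert, Finset.mem_singleton, not_or] at hq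
      obtain ⟨h1, h2⟩ := hq
      have h1v : (q:ℕ) ≠ 2*k-1 := fun h => h1 (Fin.ext (by rw [hp1v]; omega))
      have h2v : (q:ℕ) ≠ 2*k := fun h => h2 (Fin.ext (by rw [hp2v]; omega))
      rw [if_neg (by omega)]
    rw [hsum, Finset.sum_pair hne]
    rw [if_pos (by rw [hp1v]; omega), if_pos (by rw [hp2v]; omega)]
    rw [FMCIAux.main_inv ℓ η a' b' n p1 (by rw [hp1v]; omega),
      FMCIAux.main_inv ℓ η a' b' n p2 (by rw [hp2v]; omega)]
    have e1 : ((p1:ℕ)+1)/2 = k := by rw [hp1v]; omega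
    have e1' : (p1:ℕ) % 2 ≠ 0 := by rw [hp1v]; omega
    have e2 : ((p2:ℕ)+1)/2 = k := by rw [hp2v]; omega
    have e2' : (p2:ℕ) % 2 = 0 := by rw [hp2v]; omega
    rw [e1, if_neg e1', e2, if_pos e2']
    ring
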